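/- For every δ of the form δ = 2^{-n} (n ∈ ℕ) and for δ = 0 (where the grid [0,T]^d ∩ 0·ℤ^d is interpreted as [0,T]^d ∩ ℚ_*^d), the limit H_{|f|,m}^δ = lim_{T→∞} T^{-d} ∫_E sup_{t∈[0,T]^d∩δℤ^d} |f_t(z)| m(dz) exists and is a finite nonnegative real number. -/

import Mathlib

open MeasureTheory ENNReal Filter Set Topology

/-- The set `ℚ_*` of dyadic rationals. -/
def dyadicSet : Set ℝ := {x | ∃ k : ℤ, ∃ n : ℕ, x = (k : ℝ) / 2 ^ n}

/-- The grid `δ ℤ^d` for `δ > 0`, with the convention that for `δ = 0` it is `ℚ_*^d`. -/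
noncomputable def dyadicGrid (d : ℕ) (δ : ℝ) : Set (Fin d → ℝ) :=
  if δ = 0 then {t | ∀ i, t i ∈ dyadicSet} else {t | ∀ i, ∃ k : ℤ, t i = δ * k}

/-- The cube `[0,T]^d`. -/
noncomputable def pickandsCube (d : ℕ) (T : ℝ) : Set (Fin d → ℝ) :=
  Set.Icc 0 (fun _ => T)

/-- `∫_E sup_{t ∈ S} |f_t(z)| m(dz)`. -/
noncomputable def isupFun {E : Type*} [MeasurableSpace E] (m : Measure E) {d : ℕ}
    (f : (Fin d → ℝ) → E → ℝ) (S : Set (Fin d → ℝ)) : ℝ≥0∞ :=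
  ∫⁻ z, ⨆ t ∈ S, ENNReal.ofReal |f t z| ∂m

section Aux

variable {E : Type*} [MeasurableSpace E] {m : Measure E} {d : ℕ}
  {f : (Fin d → ℝ) → E → ℝ}

lemma spc_dyadicSet_countable : dyadicSet.Countable := by
  have h : dyadicSet ⊆ Set.range (fun p : ℤ × ℕ => (p.1 : ℝ) / 2 ^ p.2) := by
    rintro x ⟨k, n, rfl⟩; exact ⟨(k, n), rfl⟩
  exact (Set.countable_range _).mono h

lemma spc_grid_countable (δ : ℝ) : (dyadicGrid d δ).Countable := by
  unfold dyadicGrid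
  split
  · exact Set.countable_pi (fun i => spc_dyadicSet_countable)
  · refine Set.countable_pi (s := fun _ : Fin d => {x : ℝ | ∃ k : ℤ, x = δ * k}) (fun i => ?_)
    have h : {x : ℝ | ∃ k : ℤ, x = δ * k} ⊆ Set.range (fun k : ℤ => δ * k) := by
      rintro x ⟨k, rfl⟩; exact ⟨k, rfl⟩
    exact (Set.countable_range _).mono h

lemma spc_mem_grid_zero {t : Fin d → ℝ} : t ∈ dyadicGrid d 0 ↔ ∀ i, t i ∈ dyadicSet := by
  simp [dyadicGrid]

lemma spc_mem_grid_pos {δ : ℝ} (hδ : δ ≠ 0) {t : Fin d → ℝ} :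
    t ∈ dyadicGrid d δ ↔ ∀ i, ∃ k : ℤ, t i = δ * k := by
  simp [dyadicGrid, hδ]

lemma spc_grid_subset_zero {δ : ℝ} (hδ : δ = 0 ∨ ∃ n : ℕ, δ = ((2 : ℝ) ^ n)⁻¹) :
    dyadicGrid d δ ⊆ dyadicGrid d 0 := by
  rcases hδ with rfl | ⟨n, rfl⟩
  · exact subset_rfl
  · intro t ht
    have hne : ((2 : ℝ) ^ n)⁻¹ ≠ 0 := by positivity
    rw [spc_mem_grid_pos hne] at ht
    rw [spc_mem_grid_zero]
    intro i
    obtain ⟨k, hk⟩ := ht i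
    exact ⟨k, n, by rw [hk]; field_simp⟩

lemma spc_grid_translate {δ : ℝ} (hδ : δ = 0 ∨ ∃ n : ℕ, δ = ((2 : ℝ) ^ n)⁻¹)
    {t c : Fin d → ℝ} (hc : ∀ i, ∃ z : ℤ, c i = z) (ht : t ∈ dyadicGrid d δ) :
    t + c ∈ dyadicGrid d δ := by
  rcases hδ with rfl | ⟨n, rfl⟩
  · rw [spc_mem_grid_zero] at ht ⊢
    intro i
    obtain ⟨k, nn, hk⟩ := ht i
    obtain ⟨z, hz⟩ := hc i
    refine ⟨k + z * 2 ^ nn, nn, ?_⟩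
    have h2 : (2 : ℝ) ^ nn ≠ 0 := by positivity
    simp only [Pi.add_apply, hk, hz]
    push_cast
    field_simp
  · have hne : ((2 : ℝ) ^ n)⁻¹ ≠ 0 := by positivity
    rw [spc_mem_grid_pos hne] at ht ⊢
    intro i
    obtain ⟨k, hk⟩ := ht i
    obtain ⟨z, hz⟩ := hc i
    refine ⟨k + z * 2 ^ n, ?_⟩
    have h2 : (2 : ℝ) ^ n ≠ 0 := by positivity
    simp only [Pi.add_apply, hk, hz]
    push_cast
    field_simp

lemma spc_measurable_isup (hmeas : ∀ t, Measurable (f t)) {S : Set (Fin d → ℝ)}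
    (hS : S.Countable) :
    Measurable fun z => ⨆ t ∈ S, ENNReal.ofReal |f t z| :=
  Measurable.biSup _ hS fun t _ => ((hmeas t).abs).ennreal_ofReal

lemma spc_isupFun_mono {S S' : Set (Fin d → ℝ)} (h : S ⊆ S') :
    isupFun m f S ≤ isupFun m f S' :=
  lintegral_mono fun z => biSup_mono (fun t ht => h ht)

lemma spc_isupFun_iUnion_le (hmeas : ∀ t, Measurable (f t)) {ι : Type*} (J : Finset ι)
    (S : ι → Set (Fin d → ℝ)) (hS : ∀ j, (S j).Countable) :
    isupFun m f (⋃ j ∈ J, S j) ≤ ∑ j ∈ J, isupFun m f (S j) := by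
  unfold isupFun
  rw [← lintegral_finset_sum _ (fun j _ => spc_measurable_isup hmeas (hS j))]
  refine lintegral_mono fun z => ?_
  refine iSup₂_le fun t ht => ?_
  simp only [Set.mem_iUnion] at ht
  obtain ⟨j, hj, htj⟩ := ht
  calc ENNReal.ofReal |f t z| ≤ ⨆ t ∈ S j, ENNReal.ofReal |f t z| := le_biSup (fun t => ENNReal.ofReal |f t z|) htj
    _ ≤ ∑ j ∈ J, ⨆ t ∈ S j, ENNReal.ofReal |f t z| :=
        Finset.single_le_sum (f := fun j => ⨆ t ∈ S j, ENNReal.ofReal |f t z|) (fun _ _ => zero_le) hj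


lemma spc_cube_compact (T : ℝ) : IsCompact (pickandsCube d T) := by
  rw [pickandsCube]; exact isCompact_Icc

lemma spc_finite_pos_grid {n : ℕ} (T : ℝ) :
    (pickandsCube d T ∩ dyadicGrid d ((2 : ℝ) ^ n)⁻¹).Finite := by
  set δ : ℝ := ((2 : ℝ) ^ n)⁻¹ with hδdef
  have hδpos : (0 : ℝ) < δ := by positivity
  have hne : δ ≠ 0 := ne_of_gt hδpos
  set B : Set ℝ := (fun z : ℤ => δ * z) '' (Set.Icc 0 ⌈T / δ⌉) with hB
  have hBfin : B.Finite := (Set.finite_Icc _ _).image _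
  have hsub : pickandsCube d T ∩ dyadicGrid d δ ⊆ Set.pi Set.univ (fun _ : Fin d => B) := by
    rintro t ⟨htc, htg⟩ i _
    obtain ⟨k, hk⟩ := (spc_mem_grid_pos hne).1 htg i
    have h0 : (0 : ℝ) ≤ t i := htc.1 i
    have h1 : t i ≤ T := htc.2 i
    refine ⟨k, ⟨?_, ?_⟩, hk.symm⟩
    · have : (0 : ℝ) ≤ (k : ℝ) := nonneg_of_mul_nonneg_right (by rw [← hk]; exact h0) hδpos
      exact_mod_cast this
    · have hkr : (k : ℝ) ≤ T / δ := by
        rw [le_div_iff₀ hδpos]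
        calc (k : ℝ) * δ = δ * k := mul_comm _ _
          _ ≤ T := by rw [← hk]; exact h1
      have := hkr.trans (Int.le_ceil _)
      exact_mod_cast this
  exact (Set.Finite.pi (fun _ => hBfin)).subset (by
    intro t ht; rw [Set.mem_univ_pi]; exact fun i => hsub ht i (Set.mem_univ i))

lemma spc_isupFun_translate (hgenA : ∀ K : Set (Fin d → ℝ), IsCompact K → ∀ c : Fin d → ℝ,
      (∀ i, c i ∈ dyadicSet) →
      isupFun m (fun t z => f (t + c) z) (K ∩ dyadicGrid d 0) =
        isupFun m f (K ∩ dyadicGrid d 0))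
    {δ : ℝ} (hδ : δ = 0 ∨ ∃ n : ℕ, δ = ((2 : ℝ) ^ n)⁻¹) (T : ℝ) {c : Fin d → ℝ}
    (hc : ∀ i, ∃ z : ℤ, c i = z) :
    isupFun m f ((fun t => t + c) '' (pickandsCube d T ∩ dyadicGrid d δ)) =
      isupFun m f (pickandsCube d T ∩ dyadicGrid d δ) := by
  have hcd : ∀ i, c i ∈ dyadicSet := fun i => by
    obtain ⟨z, hz⟩ := hc i; exact ⟨z, 0, by simp [hz]⟩
  have key : ∀ K : Set (Fin d → ℝ), IsCompact K →
      isupFun m f ((fun t => t + c) '' (K ∩ dyadicGrid d 0)) =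
        isupFun m f (K ∩ dyadicGrid d 0) := by
    intro K hK
    rw [← hgenA K hK c hcd]
    unfold isupFun
    refine lintegral_congr fun z => ?_
    exact iSup_image
  rcases hδ with rfl | ⟨n, rfl⟩
  · exact key _ (spc_cube_compact T)
  · set S := pickandsCube d T ∩ dyadicGrid d ((2 : ℝ) ^ n)⁻¹ with hS
    have hSsub : S ⊆ dyadicGrid d 0 := fun t ht =>
      spc_grid_subset_zero (Or.inr ⟨n, rfl⟩) ht.2
    have h := key S (spc_finite_pos_grid T).isCompact
    rwa [Set.inter_eq_left.mpr hSsub] at h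

lemma spc_covering {δ : ℝ} (hδ : δ = 0 ∨ ∃ n : ℕ, δ = ((2 : ℝ) ^ n)⁻¹)
    (k N : ℕ) (hk : 1 ≤ k) (hN : 1 ≤ N) :
    pickandsCube d ((N : ℝ) * k) ∩ dyadicGrid d δ ⊆
      ⋃ j ∈ (Finset.univ : Finset (Fin d → Fin N)),
        (fun t => t + (fun i => (k : ℝ) * (j i : ℕ))) ''
          (pickandsCube d k ∩ dyadicGrid d δ) := by
  rintro t ⟨htc, htg⟩
  have hkpos : (0 : ℝ) < k := by exact_mod_cast hk
  have ht0 : ∀ i, (0 : ℝ) ≤ t i := fun i => htc.1 i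
  have ht1 : ∀ i, t i ≤ (N : ℝ) * k := fun i => htc.2 i
  let j : Fin d → Fin N := fun i =>
    ⟨min ⌊t i / k⌋₊ (N - 1), lt_of_le_of_lt (min_le_right _ _) (by omega)⟩
  set c : Fin d → ℝ := fun i => (k : ℝ) * ((j i : ℕ) : ℝ) with hcdef
  have hbounds : ∀ i, 0 ≤ t i - c i ∧ t i - c i ≤ k := by
    intro i
    set a : ℕ := min ⌊t i / k⌋₊ (N - 1) with ha
    have hja : ((j i : ℕ) : ℝ) = (a : ℝ) := rfl
    constructor
    · have h1 : (a : ℝ) ≤ t i / k := by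
        calc (a : ℝ) ≤ (⌊t i / k⌋₊ : ℝ) := by exact_mod_cast min_le_left _ _
          _ ≤ t i / k := Nat.floor_le (div_nonneg (ht0 i) hkpos.le)
      have : (k : ℝ) * a ≤ t i := by
        rw [mul_comm, ← le_div_iff₀ hkpos]; exact h1
      simp only [hcdef, hja]; linarith
    · rcases le_or_gt ⌊t i / k⌋₊ (N - 1) with hcase | hcase
      · have haeq : a = ⌊t i / k⌋₊ := by omega
        have h2 : t i / k < (a : ℝ) + 1 := by
          rw [haeq]; push_cast; exact Nat.lt_floor_add_one _
        have : t i < k * ((a : ℝ) + 1) := by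
          rw [mul_comm, ← div_lt_iff₀ hkpos]; exact h2
        simp only [hcdef, hja]; nlinarith
      · have haeq : a = N - 1 := by omega
        have hNr : ((N - 1 : ℕ) : ℝ) = (N : ℝ) - 1 := by
          push_cast [Nat.cast_sub hN]; ring
        have : t i ≤ (N : ℝ) * k := ht1 i
        simp only [hcdef, hja, haeq, hNr]; nlinarith
  have hcint : ∀ i, ∃ z : ℤ, (-c) i = z := by
    intro i
    refine ⟨-((k : ℤ) * (j i : ℕ)), ?_⟩
    simp only [Pi.neg_apply, hcdef]; push_cast; ring
  refine Set.mem_biUnion (Finset.mem_univ j) ⟨t - c, ⟨⟨?_, ?_⟩, ?_⟩, by ext i; show t i - c i + c i = t i; ring⟩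
  · intro i; simpa using (hbounds i).1
  · intro i; simpa using (hbounds i).2
  · have := spc_grid_translate hδ hcint htg
    rwa [sub_eq_add_neg]


lemma spc_key (hmeas : ∀ t, Measurable (f t))
    (hgenA : ∀ K : Set (Fin d → ℝ), IsCompact K → ∀ c : Fin d → ℝ,
      (∀ i, c i ∈ dyadicSet) →
      isupFun m (fun t z => f (t + c) z) (K ∩ dyadicGrid d 0) =
        isupFun m f (K ∩ dyadicGrid d 0))
    {δ : ℝ} (hδ : δ = 0 ∨ ∃ n : ℕ, δ = ((2 : ℝ) ^ n)⁻¹)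
    (k N : ℕ) (hk : 1 ≤ k) (hN : 1 ≤ N) :
    isupFun m f (pickandsCube d ((N : ℝ) * k) ∩ dyadicGrid d δ) ≤
      (N : ℝ≥0∞) ^ d * isupFun m f (pickandsCube d (k : ℝ) ∩ dyadicGrid d δ) := by
  have hcnt : ∀ T : ℝ, (pickandsCube d T ∩ dyadicGrid d δ).Countable :=
    fun T => (spc_grid_countable δ).mono Set.inter_subset_right
  calc isupFun m f (pickandsCube d ((N : ℝ) * k) ∩ dyadicGrid d δ)
      ≤ isupFun m f (⋃ j ∈ (Finset.univ : Finset (Fin d → Fin N)),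
          (fun t => t + (fun i => (k : ℝ) * (j i : ℕ))) ''
            (pickandsCube d (k : ℝ) ∩ dyadicGrid d δ)) :=
        spc_isupFun_mono (spc_covering hδ k N hk hN)
    _ ≤ ∑ j ∈ (Finset.univ : Finset (Fin d → Fin N)),
          isupFun m f ((fun t => t + (fun i => (k : ℝ) * (j i : ℕ))) ''
            (pickandsCube d (k : ℝ) ∩ dyadicGrid d δ)) :=
        spc_isupFun_iUnion_le hmeas _ _ (fun j => (hcnt k).image _)
    _ = ∑ _j ∈ (Finset.univ : Finset (Fin d → Fin N)),
          isupFun m f (pickandsCube d (k : ℝ) ∩ dyadicGrid d δ) :=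
        Finset.sum_congr rfl fun j _ =>
          spc_isupFun_translate hgenA hδ (k : ℝ)
            (fun i => ⟨(k : ℤ) * ((j i : ℕ) : ℤ), by push_cast; ring⟩)
    _ = (N : ℝ≥0∞) ^ d * isupFun m f (pickandsCube d (k : ℝ) ∩ dyadicGrid d δ) := by
        rw [Finset.sum_const, Finset.card_univ]
        have hcard : Fintype.card (Fin d → Fin N) = N ^ d := by
          simp [Fintype.card_fun]
        rw [hcard, nsmul_eq_mul]
        push_cast
        ring

end Aux

theorem stable_pickands_constant_exists
    {E : Type*} [MeasurableSpace E] (m : Measure E) [SigmaFinite m]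
    (d : ℕ) (hd : 0 < d) (f : (Fin d → ℝ) → E → ℝ)
    (hmeas : ∀ t, Measurable (f t))
    (hint : ∀ t, (∫⁻ z, ENNReal.ofReal |f t z| ∂m) < ⊤)
    (hnorm2 : ∀ K : Set (Fin d → ℝ), IsCompact K →
      isupFun m f (K ∩ dyadicGrid d 0) < ⊤)
    (hgenA : ∀ K : Set (Fin d → ℝ), IsCompact K → ∀ c : Fin d → ℝ,
      (∀ i, c i ∈ dyadicSet) →
      isupFun m (fun t z => f (t + c) z) (K ∩ dyadicGrid d 0) =
        isupFun m f (K ∩ dyadicGrid d 0)) :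
    ∀ δ : ℝ, (δ = 0 ∨ ∃ n : ℕ, δ = ((2 : ℝ) ^ n)⁻¹) →
      ∃ H : ℝ≥0∞, H ≠ ⊤ ∧
        Tendsto (fun T : ℝ =>
            isupFun m f (pickandsCube d T ∩ dyadicGrid d δ) / ENNReal.ofReal (T ^ d))
          atTop (𝓝 H) := by
  intro δ hδ
  set g : ℝ → ℝ≥0∞ := fun T => isupFun m f (pickandsCube d T ∩ dyadicGrid d δ) with hg
  have gmono : ∀ {T T' : ℝ}, T ≤ T' → g T ≤ g T' := by
    intro T T' h
    refine spc_isupFun_mono (Set.inter_subset_inter_left _ ?_)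
    unfold pickandsCube
    exact Set.Icc_subset_Icc le_rfl (fun i => h)
  have gfin : ∀ T : ℝ, g T < ⊤ := by
    intro T
    refine lt_of_le_of_lt
      (spc_isupFun_mono (Set.inter_subset_inter_right _ (spc_grid_subset_zero hδ))) ?_
    exact hnorm2 (pickandsCube d T) (spc_cube_compact T)
  have key := spc_key (m := m) hmeas hgenA hδ
  set u : ℝ → ℝ≥0∞ := fun T => g T / ENNReal.ofReal (T ^ d) with hu
  set term : ℕ → ℝ≥0∞ := fun k => g k * (((k : ℝ≥0∞)) ^ d)⁻¹ with hterm
  set H : ℝ≥0∞ := ⨅ k : ℕ, term (k + 1) with hH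
  have hterm1 : term 1 ≠ ⊤ := by
    simp only [hterm, Nat.cast_one, one_pow, inv_one, mul_one]
    exact (gfin 1).ne
  have hHfin : H ≠ ⊤ :=
    ne_top_of_le_ne_top hterm1 (by simpa using iInf_le (fun k : ℕ => term (k + 1)) 0)
  -- limsup bound
  have hlimsup : Filter.limsup u atTop ≤ H := by
    refine le_iInf fun k0 => ?_
    set k := k0 + 1 with hkdef
    have hk : 1 ≤ k := Nat.le_add_left 1 k0
    have hkpos : (0 : ℝ) < k := by positivity
    have ev : ∀ᶠ T in atTop, u T ≤ g k * ENNReal.ofReal ((1 / k + 1 / T) ^ d) := by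
      filter_upwards [eventually_ge_atTop (1 : ℝ)] with T hT
      have hTpos : (0 : ℝ) < T := by linarith
      set N := ⌈T / k⌉₊ with hN
      have hN1 : 1 ≤ N := Nat.ceil_pos.mpr (div_pos hTpos hkpos)
      have h1 : T ≤ (N : ℝ) * k := by
        have h := Nat.le_ceil (T / k)
        calc T = T / k * k := by field_simp
          _ ≤ (N : ℝ) * k := by nlinarith
      have h2 : g T ≤ (N : ℝ≥0∞) ^ d * g ((k : ℕ) : ℝ) := (gmono h1).trans (key k N hk hN1)
      have hTd0 : ENNReal.ofReal (T ^ d) ≠ 0 := by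
        rw [ne_eq, ENNReal.ofReal_eq_zero, not_le]; positivity
      show g T / ENNReal.ofReal (T ^ d) ≤ g k * ENNReal.ofReal ((1 / k + 1 / T) ^ d)
      rw [ENNReal.div_le_iff hTd0 ENNReal.ofReal_ne_top]
      have hNle : (N : ℝ) ≤ T / k + 1 := (Nat.ceil_lt_add_one (by positivity)).le
      calc g T ≤ (N : ℝ≥0∞) ^ d * g k := h2
        _ = g k * ENNReal.ofReal ((N : ℝ) ^ d) := by
            rw [mul_comm]
            congr 1
            rw [← ENNReal.ofReal_natCast N, ← ENNReal.ofReal_pow (Nat.cast_nonneg N)]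
        _ ≤ g k * ENNReal.ofReal ((T / k + 1) ^ d) :=
            mul_le_mul_right
              (ENNReal.ofReal_le_ofReal (pow_le_pow_left₀ (Nat.cast_nonneg N) hNle d)) _
        _ = g k * ENNReal.ofReal ((1 / k + 1 / T) ^ d) * ENNReal.ofReal (T ^ d) := by
            rw [mul_assoc, ← ENNReal.ofReal_mul (by positivity), ← mul_pow]
            congr 3
            field_simp
    have htends : Tendsto (fun T : ℝ => g k * ENNReal.ofReal ((1 / k + 1 / T) ^ d)) atTop
        (𝓝 (g k * ENNReal.ofReal ((1 / (k : ℝ)) ^ d))) := by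
      refine ENNReal.Tendsto.const_mul ?_ (Or.inr (gfin k).ne)
      refine (ENNReal.continuous_ofReal.tendsto _).comp ?_
      have h0 : Tendsto (fun T : ℝ => 1 / T) atTop (𝓝 0) := by
        simp only [one_div]; exact tendsto_inv_atTop_zero
      have h3 : Tendsto (fun T : ℝ => (1 / (k : ℝ) + 1 / T)) atTop (𝓝 (1 / (k : ℝ) + 0)) :=
        tendsto_const_nhds.add h0
      simpa using h3.pow d
    have hterm_eq : g k * ENNReal.ofReal ((1 / (k : ℝ)) ^ d) = term k := by
      simp only [hterm]
      congr 1
      rw [one_div, ENNReal.ofReal_pow (by positivity), ENNReal.ofReal_inv_of_pos hkpos,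
        ENNReal.ofReal_natCast, ENNReal.inv_pow]
    calc Filter.limsup u atTop
        ≤ Filter.limsup (fun T => g k * ENNReal.ofReal ((1 / k + 1 / T) ^ d)) atTop :=
          limsup_le_limsup ev
      _ = g k * ENNReal.ofReal ((1 / (k : ℝ)) ^ d) := htends.limsup_eq
      _ = term k := hterm_eq
  -- liminf bound
  have hliminf : H ≤ Filter.liminf u atTop := by
    have ev : ∀ᶠ T in atTop, H * ENNReal.ofReal ((1 - 1 / T) ^ d) ≤ u T := by
      filter_upwards [eventually_ge_atTop (1 : ℝ)] with T hT
      have hTpos : (0 : ℝ) < T := by linarith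
      have h01 : (0 : ℝ) ≤ 1 - 1 / T := by
        rw [sub_nonneg, div_le_one hTpos]; linarith
      set M := ⌊T⌋₊ with hM
      have hM1 : 1 ≤ M := Nat.le_floor (by exact_mod_cast hT)
      have hMT : (M : ℝ) ≤ T := Nat.floor_le hTpos.le
      have hHM : H ≤ term M := by
        have h := iInf_le (fun k : ℕ => term (k + 1)) (M - 1)
        have hM' : M - 1 + 1 = M := by omega
        rwa [hM'] at h
      have hMd0 : ((M : ℝ≥0∞)) ^ d ≠ 0 := by
        exact pow_ne_zero _ (Nat.cast_ne_zero.mpr (by omega))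
      have hMdtop : ((M : ℝ≥0∞)) ^ d ≠ ⊤ := ENNReal.pow_ne_top (ENNReal.natCast_ne_top M)
      have hgM : H * (M : ℝ≥0∞) ^ d ≤ g M := by
        calc H * (M : ℝ≥0∞) ^ d ≤ (g M * (((M : ℝ≥0∞)) ^ d)⁻¹) * (M : ℝ≥0∞) ^ d :=
              mul_le_mul_left hHM _
          _ = g M := by rw [mul_assoc, ENNReal.inv_mul_cancel hMd0 hMdtop, mul_one]
      have hTd0 : ENNReal.ofReal (T ^ d) ≠ 0 := by
        rw [ne_eq, ENNReal.ofReal_eq_zero, not_le]; positivity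
      show H * ENNReal.ofReal ((1 - 1 / T) ^ d) ≤ g T / ENNReal.ofReal (T ^ d)
      rw [ENNReal.le_div_iff_mul_le (Or.inl hTd0) (Or.inl ENNReal.ofReal_ne_top)]
      calc H * ENNReal.ofReal ((1 - 1 / T) ^ d) * ENNReal.ofReal (T ^ d)
          = H * ENNReal.ofReal (((1 - 1 / T) * T) ^ d) := by
            rw [mul_assoc, ← ENNReal.ofReal_mul (pow_nonneg h01 d), mul_pow]
        _ = H * ENNReal.ofReal ((T - 1) ^ d) := by
            congr 2
            field_simp
        _ ≤ H * ENNReal.ofReal ((M : ℝ) ^ d) := by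
            refine mul_le_mul_right
              (ENNReal.ofReal_le_ofReal (pow_le_pow_left₀ (by linarith) ?_ d)) _
            have h2 := Nat.sub_one_lt_floor T
            linarith
        _ = H * (M : ℝ≥0∞) ^ d := by
            rw [← ENNReal.ofReal_natCast M, ← ENNReal.ofReal_pow (Nat.cast_nonneg M)]
        _ ≤ g M := hgM
        _ ≤ g T := gmono hMT
    have htends : Tendsto (fun T : ℝ => H * ENNReal.ofReal ((1 - 1 / T) ^ d)) atTop
        (𝓝 (H * ENNReal.ofReal ((1 - 0 : ℝ) ^ d))) := by
      refine ENNReal.Tendsto.const_mul ?_ (Or.inr hHfin)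
      refine (ENNReal.continuous_ofReal.tendsto _).comp ?_
      have h0 : Tendsto (fun T : ℝ => 1 / T) atTop (𝓝 0) := by
        simp only [one_div]; exact tendsto_inv_atTop_zero
      exact (tendsto_const_nhds.sub h0).pow d
    have hHeq : H * ENNReal.ofReal ((1 - 0 : ℝ) ^ d) = H := by
      norm_num
    calc H = Filter.liminf (fun T : ℝ => H * ENNReal.ofReal ((1 - 1 / T) ^ d)) atTop := by
          rw [htends.liminf_eq, hHeq]
      _ ≤ Filter.liminf u atTop := liminf_le_liminf ev
  exact ⟨H, hHfin, tendsto_of_le_liminf_of_limsup_le hliminf hlimsup⟩
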